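/- There exists a constant C > 0 with the following property. Let ρ > 0, 0 < δ ≤ 1 with δ < ρ, and a, b ≥ 0. Let A, B : ℤ × ℤ → ℂ satisfy: |A(i,j)| ≤ a e^{−ρ|i−j|} for all i, j; for every (i,j) there is a complex number A^∞(i,j) such that |A(i+t, j+t) − A^∞(i,j)| ≤ (a/t) e^{−ρ|i−j|} for every integer t ≥ 1; and the analogous conditions for B with constant b and limits B^∞. Then for every (i,j): (1) the series P(i,j) := ∑_{k∈ℤ} A(i,k) B(k,j) and P^∞(i,j) := ∑_{k∈ℤ} A^∞(i,k) B^∞(k,j) converge absolutely; (2) P(i+t, j+t) → P^∞(i,j) as t → ∞; and (3) |P(i+t, j+t) − P^∞(i,j)| ≤ C δ^{−1} a b t^{−1} e^{−(ρ−δ)|i−j|} for every integer t ≥ 1. -/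

import Mathlib

open Real Filter

private lemma summable_exp_negabs {δ : ℝ} (hδ : 0 < δ) :
    Summable (fun n : ℤ => Real.exp (-δ * |(n : ℝ)|)) := by
  have hlt : Real.exp (-δ) < 1 := Real.exp_lt_one_iff.mpr (by linarith)
  have hnat : Summable (fun n : ℕ => Real.exp (-δ) ^ n) :=
    summable_geometric_of_lt_one (Real.exp_pos _).le hlt
  apply Summable.of_nat_of_neg_add_one
  · refine hnat.congr fun n => ?_
    rw [← Real.exp_nat_mul]
    congr 1
    rw [abs_of_nonneg (by positivity : (0:ℝ) ≤ ((n:ℤ):ℝ))]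
    push_cast; ring
  · refine (hnat.mul_left (Real.exp (-δ))).congr fun n => ?_
    rw [← Real.exp_nat_mul, ← Real.exp_add]
    congr 1
    rw [show ((-((n:ℤ) + 1) : ℤ) : ℝ) = -((n:ℝ)+1) by push_cast; ring]
    rw [abs_of_nonpos (neg_nonpos.mpr (by positivity) : -((n:ℝ)+1) ≤ 0)]
    ring

private lemma tsum_exp_negabs_le {δ : ℝ} (hδ : 0 < δ) (hδ1 : δ ≤ 1) :
    ∑' n : ℤ, Real.exp (-δ * |(n : ℝ)|) ≤ 6 / δ := by
  set r := Real.exp (-δ) with hr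
  have hlt : r < 1 := Real.exp_lt_one_iff.mpr (by linarith)
  have hr0 : 0 < r := Real.exp_pos _
  have hnat : Summable (fun n : ℕ => r ^ n) := summable_geometric_of_lt_one hr0.le hlt
  have h1 : ∀ n : ℕ, Real.exp (-δ * |((n:ℤ) : ℝ)|) = r ^ n := by
    intro n
    rw [hr, ← Real.exp_nat_mul]
    congr 1
    rw [abs_of_nonneg (by positivity : (0:ℝ) ≤ ((n:ℤ):ℝ))]
    push_cast; ring
  have h2 : ∀ n : ℕ, Real.exp (-δ * |(((-((n:ℤ)+1)) : ℤ) : ℝ)|) = r * r ^ n := by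
    intro n
    rw [hr, ← Real.exp_nat_mul, ← Real.exp_add]
    congr 1
    rw [show ((-((n:ℤ) + 1) : ℤ) : ℝ) = -((n:ℝ)+1) by push_cast; ring]
    rw [abs_of_nonpos (neg_nonpos.mpr (by positivity) : -((n:ℝ)+1) ≤ 0)]
    ring
  have hs1 : Summable (fun n : ℕ => Real.exp (-δ * |((n:ℤ) : ℝ)|)) :=
    hnat.congr fun n => (h1 n).symm
  have hs2 : Summable (fun n : ℕ => Real.exp (-δ * |(((-((n:ℤ)+1)) : ℤ) : ℝ)|)) :=
    (hnat.mul_left r).congr fun n => (h2 n).symm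
  rw [tsum_of_nat_of_neg_add_one (f := fun n : ℤ => Real.exp (-δ * |(n : ℝ)|)) hs1 hs2]
  have e1 : ∑' n : ℕ, Real.exp (-δ * |((n:ℤ) : ℝ)|) = (1 - r)⁻¹ := by
    rw [tsum_congr h1, tsum_geometric_of_lt_one hr0.le hlt]
  have e2 : ∑' n : ℕ, Real.exp (-δ * |(((-((n:ℤ)+1)) : ℤ) : ℝ)|) = r * (1 - r)⁻¹ := by
    rw [tsum_congr h2, tsum_mul_left, tsum_geometric_of_lt_one hr0.le hlt]
  rw [e1, e2]
  have hkey : δ * r ≤ 1 - r := by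
    have hre : r * Real.exp δ = 1 := by rw [hr, ← Real.exp_add]; simp
    have h := Real.add_one_le_exp δ
    nlinarith
  have hr3 : (1:ℝ)/3 ≤ r := by
    have he3 : Real.exp 1 < 3 := lt_trans Real.exp_one_lt_d9 (by norm_num)
    have h1' : Real.exp (-1) ≤ r := Real.exp_le_exp.mpr (by linarith)
    have : (1:ℝ)/3 ≤ Real.exp (-1) := by
      rw [Real.exp_neg]
      rw [div_le_iff₀ (by norm_num), inv_mul_eq_div, le_div_iff₀ (Real.exp_pos 1)]
      linarith
    linarith
  have h1r : δ/3 ≤ 1 - r := by nlinarith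
  have h1rpos : (0:ℝ) < 1 - r := by linarith [div_pos hδ (by norm_num : (0:ℝ) < 3)]
  have hinv : (1 - r)⁻¹ ≤ 3/δ := by
    have : (δ/3)⁻¹ = 3/δ := by rw [inv_div]
    rw [← this]
    exact inv_anti₀ (by positivity) h1r
  have hmul : r * (1 - r)⁻¹ ≤ (1 - r)⁻¹ := by
    nlinarith [inv_nonneg.mpr h1rpos.le]
  have : 6/δ = 2 * (3/δ) := by ring
  linarith

private lemma summable_shift {δ : ℝ} (hδ : 0 < δ) (i : ℤ) :
    Summable (fun k : ℤ => Real.exp (-δ * |(i : ℝ) - (k : ℝ)|)) := by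
  rw [← (Equiv.subLeft i).summable_iff]
  refine (summable_exp_negabs hδ).congr fun n => ?_
  simp only [Function.comp, Equiv.subLeft_apply]
  congr 2
  push_cast; ring_nf

private lemma tsum_shift_le {δ : ℝ} (hδ : 0 < δ) (hδ1 : δ ≤ 1) (i : ℤ) :
    ∑' k : ℤ, Real.exp (-δ * |(i : ℝ) - (k : ℝ)|) ≤ 6 / δ := by
  rw [← (Equiv.subLeft i).tsum_eq (fun k : ℤ => Real.exp (-δ * |(i : ℝ) - (k : ℝ)|))]
  refine le_trans (le_of_eq (tsum_congr fun n => ?_)) (tsum_exp_negabs_le hδ hδ1)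
  simp only [Equiv.subLeft_apply]
  congr 2
  push_cast; ring_nf

private lemma key_bound {ρ δ : ℝ} (hδ : 0 < δ) (hδρ : δ < ρ) (i j k : ℤ) :
    Real.exp (-ρ * |(i : ℝ) - (k : ℝ)|) * Real.exp (-ρ * |(k : ℝ) - (j : ℝ)|) ≤
      Real.exp (-(ρ - δ) * |(i : ℝ) - (j : ℝ)|) * Real.exp (-δ * |(i : ℝ) - (k : ℝ)|) := by
  rw [← Real.exp_add, ← Real.exp_add]
  apply Real.exp_le_exp.mpr
  have h1 : |(i : ℝ) - (j : ℝ)| ≤ |(i : ℝ) - (k : ℝ)| + |(k : ℝ) - (j : ℝ)| := abs_sub_le _ _ _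
  nlinarith [abs_nonneg ((i:ℝ) - k), abs_nonneg ((k:ℝ) - j), abs_nonneg ((i:ℝ) - j),
    mul_nonneg (sub_nonneg.mpr hδρ.le) (sub_nonneg.mpr h1)]

private lemma key_summable {ρ δ : ℝ} (hδ : 0 < δ) (hδρ : δ < ρ) (i j : ℤ) :
    Summable (fun k : ℤ =>
      Real.exp (-ρ * |(i : ℝ) - (k : ℝ)|) * Real.exp (-ρ * |(k : ℝ) - (j : ℝ)|)) := by
  refine Summable.of_nonneg_of_le (fun k => by positivity) (fun k => key_bound hδ hδρ i j k) ?_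
  exact (summable_shift hδ i).mul_left _

private lemma key_tsum_le {ρ δ : ℝ} (hδ : 0 < δ) (hδ1 : δ ≤ 1) (hδρ : δ < ρ) (i j : ℤ) :
    ∑' k : ℤ, Real.exp (-ρ * |(i : ℝ) - (k : ℝ)|) * Real.exp (-ρ * |(k : ℝ) - (j : ℝ)|) ≤
      6 / δ * Real.exp (-(ρ - δ) * |(i : ℝ) - (j : ℝ)|) := by
  have h1 := Summable.tsum_le_tsum (fun k => key_bound hδ hδρ i j k) (key_summable hδ hδρ i j)
    ((summable_shift hδ i).mul_left _)
  rw [tsum_mul_left] at h1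
  refine h1.trans ?_
  rw [mul_comm (6/δ)]
  exact mul_le_mul_of_nonneg_left (tsum_shift_le hδ hδ1 i) (Real.exp_pos _).le

set_option maxHeartbeats 1000000 in
/-- Asymptotically Töplitz / Lipschitz-at-infinity property of matrix products:
if `A, B : ℤ × ℤ → ℂ` have exponential off-diagonal decay of rate `ρ` with constants
`a, b`, and possess diagonal-shift limits `A^∞, B^∞` with Lipschitz rate `a/t`, `b/t`,
then the product `P(i,j) = ∑_{k} A(i,k) B(k,j)` converges absolutely, the shifted products
`P(i+t, j+t)` converge to `P^∞(i,j) = ∑_k A^∞(i,k) B^∞(k,j)`, with the quantitative bound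
`|P(i+t,j+t) - P^∞(i,j)| ≤ C δ⁻¹ a b t⁻¹ e^{-(ρ-δ)|i-j|}`. -/
theorem toplitz_lipschitz_product :
    ∃ C : ℝ, 0 < C ∧
      ∀ (ρ δ a b : ℝ), 0 < δ → δ ≤ 1 → δ < ρ → 0 ≤ a → 0 ≤ b →
      ∀ (A B Ainf Binf : ℤ → ℤ → ℂ),
      (∀ i j : ℤ, ‖A i j‖ ≤ a * Real.exp (-ρ * |(i : ℝ) - (j : ℝ)|)) →
      (∀ i j : ℤ, ∀ t : ℕ, 1 ≤ t →
        ‖A (i + t) (j + t) - Ainf i j‖ ≤ a / t * Real.exp (-ρ * |(i : ℝ) - (j : ℝ)|)) →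
      (∀ i j : ℤ, ‖B i j‖ ≤ b * Real.exp (-ρ * |(i : ℝ) - (j : ℝ)|)) →
      (∀ i j : ℤ, ∀ t : ℕ, 1 ≤ t →
        ‖B (i + t) (j + t) - Binf i j‖ ≤ b / t * Real.exp (-ρ * |(i : ℝ) - (j : ℝ)|)) →
      ∀ i j : ℤ,
        (∀ i' j' : ℤ, Summable (fun k : ℤ => ‖A i' k * B k j'‖)) ∧
        Summable (fun k : ℤ => ‖Ainf i k * Binf k j‖) ∧
        Tendsto (fun t : ℕ => ∑' k : ℤ, A (i + t) k * B k (j + t)) atTop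
          (nhds (∑' k : ℤ, Ainf i k * Binf k j)) ∧
        (∀ t : ℕ, 1 ≤ t →
          ‖(∑' k : ℤ, A (i + t) k * B k (j + t)) - ∑' k : ℤ, Ainf i k * Binf k j‖ ≤
            C * δ⁻¹ * a * b / t * Real.exp (-(ρ - δ) * |(i : ℝ) - (j : ℝ)|)) := by
  refine ⟨18, by norm_num, ?_⟩
  intro ρ δ a b hδ hδ1 hδρ ha hb A B Ainf Binf hA hA' hB hB' i j
  have castabs : ∀ (p q : ℤ) (t : ℕ),
      |(((p + (t:ℤ)) : ℤ) : ℝ) - (((q + (t:ℤ)) : ℤ) : ℝ)| = |(p:ℝ) - (q:ℝ)| := by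
    intro p q t
    congr 1
    push_cast; ring
  have hAshift : ∀ (p q : ℤ) (t : ℕ),
      ‖A (p + t) (q + t)‖ ≤ a * Real.exp (-ρ * |(p:ℝ) - (q:ℝ)|) := by
    intro p q t
    have h := hA (p + t) (q + t)
    rwa [castabs] at h
  have hBshift : ∀ (p q : ℤ) (t : ℕ),
      ‖B (p + t) (q + t)‖ ≤ b * Real.exp (-ρ * |(p:ℝ) - (q:ℝ)|) := by
    intro p q t
    have h := hB (p + t) (q + t)
    rwa [castabs] at h
  have hAinf : ∀ p q : ℤ, ‖Ainf p q‖ ≤ 2 * a * Real.exp (-ρ * |(p:ℝ) - (q:ℝ)|) := by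
    intro p q
    have h1 := hA' p q 1 le_rfl
    have h2 := hAshift p q 1
    simp only [Nat.cast_one, div_one] at h1
    calc ‖Ainf p q‖ = ‖A (p+1) (q+1) - (A (p+1) (q+1) - Ainf p q)‖ := by rw [sub_sub_cancel]
      _ ≤ ‖A (p+1) (q+1)‖ + ‖A (p+1) (q+1) - Ainf p q‖ := norm_sub_le _ _
      _ ≤ 2 * a * Real.exp (-ρ * |(p:ℝ) - (q:ℝ)|) := by push_cast at h2 h1 ⊢; linarith
  have hBinf : ∀ p q : ℤ, ‖Binf p q‖ ≤ 2 * b * Real.exp (-ρ * |(p:ℝ) - (q:ℝ)|) := by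
    intro p q
    have h1 := hB' p q 1 le_rfl
    have h2 := hBshift p q 1
    simp only [Nat.cast_one, div_one] at h1
    calc ‖Binf p q‖ = ‖B (p+1) (q+1) - (B (p+1) (q+1) - Binf p q)‖ := by rw [sub_sub_cancel]
      _ ≤ ‖B (p+1) (q+1)‖ + ‖B (p+1) (q+1) - Binf p q‖ := norm_sub_le _ _
      _ ≤ 2 * b * Real.exp (-ρ * |(p:ℝ) - (q:ℝ)|) := by push_cast at h2 h1 ⊢; linarith
  have hsum1 : ∀ i' j' : ℤ, Summable (fun k : ℤ => ‖A i' k * B k j'‖) := by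
    intro i' j'
    refine Summable.of_nonneg_of_le (fun k => norm_nonneg _) (fun k => ?_)
      ((key_summable hδ hδρ i' j').mul_left (a * b))
    rw [norm_mul]
    calc ‖A i' k‖ * ‖B k j'‖
        ≤ (a * Real.exp (-ρ * |(i':ℝ) - (k:ℝ)|)) * (b * Real.exp (-ρ * |(k:ℝ) - (j':ℝ)|)) :=
          mul_le_mul (hA i' k) (hB k j') (norm_nonneg _) (by positivity)
      _ = a * b * (Real.exp (-ρ * |(i':ℝ) - (k:ℝ)|) * Real.exp (-ρ * |(k:ℝ) - (j':ℝ)|)) := by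
          ring
  have hsum2 : Summable (fun k : ℤ => ‖Ainf i k * Binf k j‖) := by
    refine Summable.of_nonneg_of_le (fun k => norm_nonneg _) (fun k => ?_)
      ((key_summable hδ hδρ i j).mul_left (2 * a * (2 * b)))
    rw [norm_mul]
    calc ‖Ainf i k‖ * ‖Binf k j‖
        ≤ (2 * a * Real.exp (-ρ * |(i:ℝ) - (k:ℝ)|)) *
            (2 * b * Real.exp (-ρ * |(k:ℝ) - (j:ℝ)|)) :=
          mul_le_mul (hAinf i k) (hBinf k j) (norm_nonneg _) (by positivity)
      _ = 2 * a * (2 * b) *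
            (Real.exp (-ρ * |(i:ℝ) - (k:ℝ)|) * Real.exp (-ρ * |(k:ℝ) - (j:ℝ)|)) := by ring
  have hmain : ∀ t : ℕ, 1 ≤ t →
      ‖(∑' k : ℤ, A (i + t) k * B k (j + t)) - ∑' k : ℤ, Ainf i k * Binf k j‖ ≤
        18 * δ⁻¹ * a * b / t * Real.exp (-(ρ - δ) * |(i:ℝ) - (j:ℝ)|) := by
    intro t ht
    have htR : (1:ℝ) ≤ (t:ℝ) := by exact_mod_cast ht
    have htpos : (0:ℝ) < (t:ℝ) := by linarith
    have hre := (Equiv.addRight (t:ℤ)).tsum_eq (fun k => A (i + t) k * B k (j + t))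
    simp only [Equiv.coe_addRight] at hre
    replace hre := hre.symm
    have hS1 : Summable (fun m : ℤ => A (i + t) (m + t) * B (m + t) (j + t)) := by
      have h := (hsum1 (i + t) (j + t)).of_norm
      have h2 := ((Equiv.addRight (t:ℤ)).summable_iff).mpr h
      simpa only [Function.comp_def, Equiv.coe_addRight] using h2
    have hS2 : Summable (fun m : ℤ => Ainf i m * Binf m j) := hsum2.of_norm
    have hterm : ∀ m : ℤ,
        ‖A (i + t) (m + t) * B (m + t) (j + t) - Ainf i m * Binf m j‖ ≤
          3 * a * b / t *
            (Real.exp (-ρ * |(i:ℝ) - (m:ℝ)|) * Real.exp (-ρ * |(m:ℝ) - (j:ℝ)|)) := by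
      intro m
      have e1 : A (i + t) (m + t) * B (m + t) (j + t) - Ainf i m * Binf m j
          = (A (i + t) (m + t) - Ainf i m) * B (m + t) (j + t)
            + Ainf i m * (B (m + t) (j + t) - Binf m j) := by ring
      rw [e1]
      refine (norm_add_le _ _).trans ?_
      rw [norm_mul, norm_mul]
      have b1 : ‖A (i + t) (m + t) - Ainf i m‖ * ‖B (m + t) (j + t)‖ ≤
          (a / t * Real.exp (-ρ * |(i:ℝ) - (m:ℝ)|)) *
            (b * Real.exp (-ρ * |(m:ℝ) - (j:ℝ)|)) :=
        mul_le_mul (hA' i m t ht) (hBshift m j t) (norm_nonneg _)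
          (mul_nonneg (div_nonneg ha (Nat.cast_nonneg t)) (Real.exp_pos _).le)
      have b2 : ‖Ainf i m‖ * ‖B (m + t) (j + t) - Binf m j‖ ≤
          (2 * a * Real.exp (-ρ * |(i:ℝ) - (m:ℝ)|)) *
            (b / t * Real.exp (-ρ * |(m:ℝ) - (j:ℝ)|)) :=
        mul_le_mul (hAinf i m) (hB' m j t ht) (norm_nonneg _)
          (by positivity)
      refine (add_le_add b1 b2).trans (le_of_eq ?_)
      ring
    have hmaj : Summable (fun m : ℤ => 3 * a * b / t *
        (Real.exp (-ρ * |(i:ℝ) - (m:ℝ)|) * Real.exp (-ρ * |(m:ℝ) - (j:ℝ)|))) :=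
      (key_summable hδ hδρ i j).mul_left _
    have hnorms : Summable (fun m : ℤ =>
        ‖A (i + t) (m + t) * B (m + t) (j + t) - Ainf i m * Binf m j‖) :=
      Summable.of_nonneg_of_le (fun m => norm_nonneg _) hterm hmaj
    rw [hre, ← Summable.tsum_sub hS1 hS2]
    refine (norm_tsum_le_tsum_norm hnorms).trans ?_
    have h3ab : (0:ℝ) ≤ 3 * a * b / t :=
      div_nonneg (by positivity) (Nat.cast_nonneg t)
    calc ∑' m : ℤ, ‖A (i + t) (m + t) * B (m + t) (j + t) - Ainf i m * Binf m j‖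
        ≤ ∑' m : ℤ, 3 * a * b / t *
            (Real.exp (-ρ * |(i:ℝ) - (m:ℝ)|) * Real.exp (-ρ * |(m:ℝ) - (j:ℝ)|)) :=
          Summable.tsum_le_tsum hterm hnorms hmaj
      _ = 3 * a * b / t * ∑' m : ℤ,
            Real.exp (-ρ * |(i:ℝ) - (m:ℝ)|) * Real.exp (-ρ * |(m:ℝ) - (j:ℝ)|) :=
          tsum_mul_left
      _ ≤ 3 * a * b / t * (6 / δ * Real.exp (-(ρ - δ) * |(i:ℝ) - (j:ℝ)|)) :=
          mul_le_mul_of_nonneg_left (key_tsum_le hδ hδ1 hδρ i j) h3ab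
      _ = 18 * δ⁻¹ * a * b / t * Real.exp (-(ρ - δ) * |(i:ℝ) - (j:ℝ)|) := by
          field_simp
          ring
  refine ⟨hsum1, hsum2, ?_, hmain⟩
  rw [tendsto_iff_norm_sub_tendsto_zero]
  have hK : Tendsto (fun t : ℕ =>
      (18 * δ⁻¹ * a * b * Real.exp (-(ρ - δ) * |(i:ℝ) - (j:ℝ)|)) / t) atTop (nhds 0) :=
    tendsto_const_div_atTop_nhds_zero_nat _
  refine squeeze_zero' (Eventually.of_forall fun t => norm_nonneg _) ?_ hK
  filter_upwards [eventually_ge_atTop 1] with t ht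
  exact (hmain t ht).trans (le_of_eq (by ring))
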